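/- If f is L-smooth and convex on a compact convex set C of diameter D, and the Frank-Wolfe iterates are defined by x_{k+1} = x_k + γ_k (s_k - x_k) with s_k ∈ argmin_{s∈C} ⟨∇f(x_k), s⟩ and step size γ_k = 2/(k+2), then for all k ≥ 1, f(x_k) - f(x*) ≤ 2LD²/(k+2), where x* is a minimizer of f over C. -/

import Mathlib

open scoped RealInnerProductSpace

lemma grad_ineq {E : Type*} [NormedAddCommGroup E] [InnerProductSpace ℝ E] [CompleteSpace E]
    {C : Set E} {f : E → ℝ} {g a b : E}
    (hconv : ConvexOn ℝ C f) (hgrad : HasGradientAt f g a)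
    (ha : a ∈ C) (hb : b ∈ C) : ⟪g, b - a⟫ ≤ f b - f a := by
  have hline : HasDerivAt (fun t : ℝ => a + t • (b - a)) (b - a) 0 := by
    simpa using ((hasDerivAt_id (0 : ℝ)).smul_const (b - a)).const_add a
  have hF : HasFDerivAt f (InnerProductSpace.toDual ℝ E g) a := hgrad.hasFDerivAt
  have hF' : HasFDerivAt f (InnerProductSpace.toDual ℝ E g) (a + (0:ℝ) • (b - a)) := by
    simpa using hF
  have hcomp : HasDerivAt (fun t : ℝ => f (a + t • (b - a))) ⟪g, b - a⟫ 0 := by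
    have hc := hF'.comp_hasDerivAt 0 hline
    simp at hc
    exact hc
  have hsl := hasDerivAt_iff_tendsto_slope.1 hcomp
  have h1 : Filter.Tendsto (slope (fun t : ℝ => f (a + t • (b - a))) 0)
      (nhdsWithin 0 (Set.Ioi 0)) (nhds ⟪g, b - a⟫) :=
    hsl.mono_left (nhdsWithin_mono 0 (fun t ht => ne_of_gt ht))
  refine le_of_tendsto h1 ?_
  filter_upwards [Ioc_mem_nhdsGT (zero_lt_one (α := ℝ))] with t ht
  have hcv : f (a + t • (b - a)) ≤ (1 - t) * f a + t * f b := by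
    have h := hconv.2 ha hb (by linarith [ht.2] : (0:ℝ) ≤ 1 - t) (le_of_lt ht.1) (by ring)
    have heq : (1 - t) • a + t • b = a + t • (b - a) := by module
    rw [heq] at h
    simpa using h
  have : (f (a + t • (b - a)) - f (a + (0:ℝ) • (b - a))) / (t - 0) ≤ f b - f a := by
    rw [div_le_iff₀ (by linarith [ht.1] : (0:ℝ) < t - 0)]
    simp only [zero_smul, add_zero]
    nlinarith [ht.1]
  simpa [slope_def_field] using this

/-- Frank-Wolfe convergence: `f(x_k) - f(x*) ≤ 2 L D² / (k+2)` for `k ≥ 1`. -/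
theorem fw_convergence {n : ℕ} (C : Set (EuclideanSpace ℝ (Fin n)))
    (hCne : C.Nonempty) (hCcomp : IsCompact C) (hCconv : Convex ℝ C)
    (f : EuclideanSpace ℝ (Fin n) → ℝ) (f' : EuclideanSpace ℝ (Fin n) → EuclideanSpace ℝ (Fin n))
    (L D : ℝ)
    (hD : D = Metric.diam C)
    (hgrad : ∀ x, HasGradientAt f (f' x) x)
    (hconv : ConvexOn ℝ C f)
    (hsmooth : ∀ x ∈ C, ∀ y ∈ C,
      f y ≤ f x + ⟪f' x, y - x⟫ + L / 2 * ‖y - x‖ ^ 2)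
    (x s : ℕ → EuclideanSpace ℝ (Fin n))
    (hx0 : x 0 ∈ C)
    (hs : ∀ k, s k ∈ C ∧ ∀ t ∈ C, ⟪f' (x k), s k⟫ ≤ ⟪f' (x k), t⟫)
    (hupd : ∀ k, x (k + 1) = x k + (2 / (k + 2 : ℝ)) • (s k - x k))
    (xstar : EuclideanSpace ℝ (Fin n)) (hxstar : xstar ∈ C)
    (hmin : ∀ y ∈ C, f xstar ≤ f y) :
    ∀ k : ℕ, 1 ≤ k → f (x k) - f xstar ≤ 2 * L * D ^ 2 / (k + 2 : ℝ) := by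
  -- iterates stay in C
  have hγ : ∀ k : ℕ, 0 ≤ 2 / ((k : ℝ) + 2) ∧ 2 / ((k : ℝ) + 2) ≤ 1 := by
    intro k
    constructor
    · positivity
    · rw [div_le_one (by positivity)]
      have : (0:ℝ) ≤ (k : ℝ) := Nat.cast_nonneg k
      linarith
  have hxC : ∀ k, x k ∈ C := by
    intro k
    induction k with
    | zero => exact hx0
    | succ m ih =>
      rw [hupd m]
      have heq : x m + (2 / ((m:ℝ) + 2)) • (s m - x m)
          = (1 - 2 / ((m:ℝ) + 2)) • x m + (2 / ((m:ℝ) + 2)) • s m := by module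
      rw [heq]
      exact hCconv ih (hs m).1 (by linarith [(hγ m).2]) (hγ m).1 (by ring)
  -- norm bound
  have hdist : ∀ k, ‖s k - x k‖ ≤ D := by
    intro k
    rw [hD, ← dist_eq_norm]
    exact Metric.dist_le_diam_of_mem hCcomp.isBounded (hs k).1 (hxC k)
  have hDnn : 0 ≤ D := hD ▸ Metric.diam_nonneg
  -- nonneg of L D²
  by_cases hL : 0 ≤ L
  · -- main case
    have hLD : 0 ≤ L * D ^ 2 := mul_nonneg hL (sq_nonneg D)
    -- key recursion
    have key : ∀ k : ℕ, f (x (k+1)) - f xstar ≤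
        (1 - 2 / ((k:ℝ) + 2)) * (f (x k) - f xstar)
          + (2 / ((k:ℝ) + 2))^2 * (L / 2) * D ^ 2 := by
      intro k
      set γ : ℝ := 2 / ((k:ℝ) + 2) with hγdef
      have hxk1 : x (k+1) = x k + γ • (s k - x k) := hupd k
      have hsm := hsmooth (x k) (hxC k) (x (k+1)) (hxC (k+1))
      have hdiff : x (k+1) - x k = γ • (s k - x k) := by rw [hxk1]; abel
      rw [hdiff] at hsm
      have hinner : ⟪f' (x k), γ • (s k - x k)⟫ = γ * ⟪f' (x k), s k - x k⟫ :=
        real_inner_smul_right _ _ _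
      have hnorm : ‖γ • (s k - x k)‖ ^ 2 = γ ^ 2 * ‖s k - x k‖ ^ 2 := by
        rw [norm_smul, mul_pow]
        congr 1
        rw [Real.norm_eq_abs, sq_abs]
      rw [hinner, hnorm] at hsm
      -- duality gap bound
      have hgap : ⟪f' (x k), s k - x k⟫ ≤ f xstar - f (x k) := by
        have h1 : ⟪f' (x k), s k - x k⟫ ≤ ⟪f' (x k), xstar - x k⟫ := by
          rw [inner_sub_right, inner_sub_right]
          have := (hs k).2 xstar hxstar
          linarith
        have h2 : ⟪f' (x k), xstar - x k⟫ ≤ f xstar - f (x k) :=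
          grad_ineq hconv (hgrad (x k)) (hxC k) hxstar
        linarith
      have hnb : ‖s k - x k‖ ^ 2 ≤ D ^ 2 :=
        pow_le_pow_left₀ (norm_nonneg _) (hdist k) 2
      have hγnn : 0 ≤ γ := (hγ k).1
      have hnb2 : L / 2 * (γ ^ 2 * ‖s k - x k‖ ^ 2) ≤ L / 2 * (γ ^ 2 * D ^ 2) := by
        apply mul_le_mul_of_nonneg_left _ (by linarith : (0:ℝ) ≤ L / 2)
        exact mul_le_mul_of_nonneg_left hnb (sq_nonneg γ)
      nlinarith [hsm, mul_le_mul_of_nonneg_left hgap hγnn, hnb2]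
    -- induction
    intro k hk
    induction k with
    | zero => omega
    | succ m ih =>
      rcases Nat.eq_or_lt_of_le hk with h1 | h1
      · -- m + 1 = 1, i.e. m = 0
        have hm0 : m = 0 := by omega
        subst hm0
        have hk0 := key 0
        norm_num at hk0 ⊢
        nlinarith [hk0, hLD]
      · -- m ≥ 1
        have hm1 : 1 ≤ m := by omega
        have ihm := ih hm1
        have hkm := key m
        have hm2 : (0:ℝ) < (m:ℝ) + 2 := by positivity
        have hm3 : (0:ℝ) < (m:ℝ) + 3 := by positivity
        have hcast : ((m+1 : ℕ) : ℝ) + 2 = (m:ℝ) + 3 := by push_cast; ring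
        rw [hcast]
        have hmono : (1 - 2 / ((m:ℝ) + 2)) * (f (x m) - f xstar)
            ≤ (1 - 2 / ((m:ℝ) + 2)) * (2 * L * D ^ 2 / ((m:ℝ) + 2)) :=
          mul_le_mul_of_nonneg_left ihm (by linarith [(hγ m).2])
        have halg : (1 - 2 / ((m:ℝ) + 2)) * (2 * L * D ^ 2 / ((m:ℝ) + 2))
            + (2 / ((m:ℝ) + 2))^2 * (L / 2) * D ^ 2 ≤ 2 * L * D ^ 2 / ((m:ℝ) + 3) := by
          have heq : (1 - 2 / ((m:ℝ) + 2)) * (2 * L * D ^ 2 / ((m:ℝ) + 2))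
              + (2 / ((m:ℝ) + 2))^2 * (L / 2) * D ^ 2
              = (2 * L * D ^ 2 * ((m:ℝ) + 1)) / (((m:ℝ) + 2)^2) := by
            field_simp
            ring
          rw [heq, div_le_div_iff₀ (by positivity) hm3]
          nlinarith [hLD]
        linarith [hkm, hmono, halg]
  · -- L < 0 : then C is a subsingleton
    push_neg at hL
    have hsub : C.Subsingleton := by
      by_contra hns
      rw [Set.not_subsingleton_iff] at hns
      obtain ⟨a, ha, b, hb, hab⟩ := hns
      have h2 := hsmooth a ha b hb
      have h3 : ⟪f' a, b - a⟫ ≤ f b - f a := grad_ineq hconv (hgrad a) ha hb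
      have h4 : 0 < ‖b - a‖ := by
        rw [norm_pos_iff, sub_ne_zero]
        exact fun h => hab h.symm
      nlinarith [sq_nonneg ‖b - a‖, pow_pos h4 2]
    have hD0 : D = 0 := by rw [hD, Metric.diam_subsingleton hsub]
    intro k hk
    have hxx : x k = xstar := hsub (hxC k) hxstar
    rw [hxx, hD0]
    simp
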